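/- Let O ∈ W_d with O ≠ 0 and O not a scalar multiple of ℓ^d for any linear form ℓ, and let F ∈ W_d \ K·O. Let z be the least degree of a nonzero binary form h such that h(∂/∂x, ∂/∂y)(F + cO) = 0 for some c ∈ K. If there exist a squarefree binary form h of degree z and a scalar c ∈ K with h(∂/∂x, ∂/∂y)(F + cO) = 0, then R_X(F) = z. -/

import Mathlib

open MvPolynomial Submodule

noncomputable section

/-- A linear form: a nonzero binary (i.e. two-variable) form of degree `1`. -/
def IsLinForm {K : Type*} [CommSemiring K] (l : MvPolynomial (Fin 2) K) : Prop :=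
  l ≠ 0 ∧ l.IsHomogeneous 1

/-- The `X`-rank of `F` with respect to the projection, from the point `[O]`, of the rational
normal curve `{[ℓ^d] : ℓ a linear form}`: the least `r` such that there are linear forms
`ℓ₁, …, ℓ_r` with `F ∈ span {ℓ₁^d, …, ℓ_r^d} + K·O`. -/
def RX {K : Type*} [Field K] (d : ℕ) (O F : MvPolynomial (Fin 2) K) : ℕ :=
  sInf {r : ℕ | ∃ l : Fin r → MvPolynomial (Fin 2) K, (∀ i, IsLinForm (l i)) ∧
    F ∈ span K (insert O (Set.range fun i => l i ^ d))}

/-- The apolarity action: the differential operator `h(∂/∂x, ∂/∂y)` associated to a binary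
form `h`. -/
def diffOp {K : Type*} [CommSemiring K] (h : MvPolynomial (Fin 2) K) :
    Module.End K (MvPolynomial (Fin 2) K) :=
  (AddMonoidAlgebra.coeff h).sum fun m c => c • ((pderiv (0 : Fin 2)).toLinearMap ^ m 0 *
    (pderiv (1 : Fin 2)).toLinearMap ^ m 1)

/-- `h` is a squarefree form of degree `z`: a product of `z` pairwise non-proportional linear
forms. -/
def IsSqfreeForm {K : Type*} [Field K] (z : ℕ) (h : MvPolynomial (Fin 2) K) : Prop :=
  ∃ l : Fin z → MvPolynomial (Fin 2) K, (∀ i, IsLinForm (l i)) ∧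
    (∀ i j, i ≠ j → ∀ c : K, l i ≠ c • l j) ∧ h = ∏ i, l i

namespace Aux

variable {K : Type*} [Field K]

local notation "P2" => MvPolynomial (Fin 2) K

def cX (p : P2) : K := coeff (Finsupp.single 0 1) p
def cY (p : P2) : K := coeff (Finsupp.single 1 1) p

lemma fin2_degree (m : Fin 2 →₀ ℕ) : Finsupp.degree m = m 0 + m 1 := by
  rw [Finsupp.degree_apply, Finset.sum_subset (Finset.subset_univ _)
    (fun i _ h => Finsupp.notMem_support_iff.mp h), Fin.sum_univ_two]

lemma fin2_eq (m : Fin 2 →₀ ℕ) (h : m 0 + m 1 = 1) :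
    m = Finsupp.single 0 1 ∨ m = Finsupp.single 1 1 := by
  rcases Nat.eq_zero_or_pos (m 0) with h0 | h0
  · right
    ext i
    fin_cases i <;> simp_all [Finsupp.single_apply] <;> omega
  · left
    ext i
    fin_cases i <;> simp_all [Finsupp.single_apply] <;> omega

lemma rep {l : P2} (hl : l.IsHomogeneous 1) :
    l = C (cX l) * X 0 + C (cY l) * X 1 := by
  ext m
  rw [coeff_add, coeff_C_mul, coeff_C_mul, coeff_X', coeff_X']
  by_cases h0 : m = Finsupp.single 0 1
  · subst h0
    have : ¬ (Finsupp.single (1 : Fin 2) 1 = Finsupp.single 0 1) := by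
      intro h; simpa using DFunLike.congr_fun h 0
    simp [this, cX]
  · by_cases h1 : m = Finsupp.single 1 1
    · subst h1
      have : ¬ (Finsupp.single (0 : Fin 2) 1 = Finsupp.single 1 1) := by
        intro h; simpa using DFunLike.congr_fun h 0
      simp [this, cY]
    · have : coeff m l = 0 := by
        by_contra hc
        have := hl hc
        rw [Pi.one_def, ← Finsupp.degree_eq_weight_one, fin2_degree] at this
        rcases fin2_eq m this with h | h <;> simp_all
      rw [this]
      simp [Ne.symm h0, Ne.symm h1]


def Ad : Module.End K (MvPolynomial (Fin 2) K) := (pderiv (0 : Fin 2)).toLinearMap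
def Bd : Module.End K (MvPolynomial (Fin 2) K) := (pderiv (1 : Fin 2)).toLinearMap

lemma diffOp_monomial (m : Fin 2 →₀ ℕ) (c : K) :
    diffOp (monomial m c) = c • ((Ad ^ m 0) * (Bd ^ m 1) : Module.End K (MvPolynomial (Fin 2) K)) := by
  rw [diffOp, monomial, AddMonoidAlgebra.lsingle_apply, AddMonoidAlgebra.coeff_single]
  exact Finsupp.sum_single_index (by simp)

lemma diffOp_add (p q : P2) : diffOp (p + q) = diffOp p + diffOp q := by
  rw [diffOp, diffOp, diffOp, AddMonoidAlgebra.coeff_add]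
  exact Finsupp.sum_add_index (by simp) (by intros; rw [add_smul])

lemma commAB : Commute (Ad (K:=K)) Bd := by
  apply LinearMap.ext
  intro p
  induction p using MvPolynomial.induction_on' with
  | add p q hp hq => simp_all [Module.End.mul_apply, map_add]
  | monomial m c =>
    show (pderiv 0) ((pderiv 1) (monomial m c)) = (pderiv 1) ((pderiv 0) (monomial m c))
    simp only [pderiv_monomial, Finsupp.tsub_apply, Finsupp.single_apply]
    norm_num
    rw [tsub_right_comm]
    ring_nf

lemma diffOp_mul (p q : P2) : diffOp (p * q) = diffOp p * diffOp q := by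
  induction p using MvPolynomial.induction_on' with
  | add p1 p2 ih1 ih2 => rw [add_mul, diffOp_add, diffOp_add, ih1, ih2, add_mul]
  | monomial m a =>
    induction q using MvPolynomial.induction_on' with
    | add q1 q2 ih1 ih2 => rw [mul_add, diffOp_add, diffOp_add, ih1, ih2, mul_add]
    | monomial n b =>
      rw [monomial_mul, diffOp_monomial, diffOp_monomial, diffOp_monomial,
        smul_mul_smul_comm]
      congr 1
      rw [Finsupp.add_apply, Finsupp.add_apply, pow_add, pow_add,
        ((commAB (K:=K)).symm.pow_pow (m 1) (n 0)).mul_mul_mul_comm]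

lemma diffOp_one : diffOp (1 : P2) = 1 := by
  have : (1 : P2) = monomial 0 1 := by simp
  rw [this, diffOp_monomial]
  simp

lemma diffOp_C (c : K) : diffOp (C c : P2) = c • 1 := by
  have : (C c : P2) = monomial 0 c := by simp
  rw [this, diffOp_monomial]
  simp

lemma diffOp_X0 : diffOp (X 0 : P2) = Ad := by
  have : (X 0 : P2) = monomial (Finsupp.single 0 1) 1 := by simp [X]
  rw [this, diffOp_monomial]
  simp [Ad]

lemma diffOp_X1 : diffOp (X 1 : P2) = Bd := by
  have : (X 1 : P2) = monomial (Finsupp.single 1 1) 1 := by simp [X]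
  rw [this, diffOp_monomial]
  simp [Finsupp.single_apply]

def lDeriv (a b : K) : Derivation K (MvPolynomial (Fin 2) K) (MvPolynomial (Fin 2) K) :=
  a • pderiv 0 + b • pderiv 1

lemma diffOp_eq_lDeriv {l : P2} (hl : l.IsHomogeneous 1) (p : P2) :
    diffOp l p = lDeriv (cX l) (cY l) p := by
  conv_lhs => rw [rep hl]
  rw [diffOp_add, diffOp_mul, diffOp_mul, diffOp_C, diffOp_C, diffOp_X0, diffOp_X1]
  simp [lDeriv, Ad, Bd]


/-- The pairing between a differential linear form and a linear form. -/
def pr (l m : P2) : K := cX l * cX m + cY l * cY m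

lemma diffOp_lin_pow {l m : P2} (hl : l.IsHomogeneous 1) (hm : m.IsHomogeneous 1) (n : ℕ) :
    diffOp l (m ^ n) = ((n : K) * pr l m) • m ^ (n - 1) := by
  rw [diffOp_eq_lDeriv hl, Derivation.leibniz_pow]
  have hDm : lDeriv (cX l) (cY l) m = C (pr l m) := by
    conv_lhs => rw [rep hm]
    simp [lDeriv, pr, smul_eq_C_mul, pderiv_C_mul]
    try ring
  rw [hDm, smul_eq_mul, mul_comm, ← smul_eq_C_mul, ← Nat.cast_smul_eq_nsmul K, smul_smul]

def perp (l : P2) : P2 := C (cY l) * X 0 - C (cX l) * X 1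

lemma single_ne : (Finsupp.single (0 : Fin 2) 1) ≠ Finsupp.single 1 1 := by
  intro h; simpa using DFunLike.congr_fun h 0

lemma cX_perp (l : P2) : cX (perp l) = cY l := by
  simp [perp, cX, coeff_sub, coeff_C_mul, coeff_X', single_ne.symm]

lemma cY_perp (l : P2) : cY (perp l) = -(cX l) := by
  simp [perp, cY, coeff_sub, coeff_C_mul, coeff_X', single_ne]

lemma perp_homog {l : P2} : (perp l).IsHomogeneous 1 := by
  apply MvPolynomial.IsHomogeneous.sub
  · simpa using (isHomogeneous_C (Fin 2) (cY l)).mul (isHomogeneous_X K 0)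
  · simpa using (isHomogeneous_C (Fin 2) (cX l)).mul (isHomogeneous_X K 1)

lemma perp_linForm {l : P2} (hl : IsLinForm l) : IsLinForm (perp l) := by
  refine ⟨?_, perp_homog⟩
  intro h
  apply hl.1
  have h1 : cY l = 0 := by rw [← cX_perp, h]; simp [cX]
  have h2 : cX l = 0 := neg_eq_zero.mp (by rw [← cY_perp, h]; simp [cY])
  rw [rep hl.2, h1, h2]
  simp

lemma pr_perp_self (l : P2) : pr l (perp l) = 0 := by
  simp [pr, cX_perp, cY_perp]; ring

lemma pr_perp_self' (l : P2) : pr (perp l) l = 0 := by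
  simp [pr, cX_perp, cY_perp]; ring

lemma smul_linear (c : K) (l : P2) (hl : l.IsHomogeneous 1) :
    c • l = C (c * cX l) * X 0 + C (c * cY l) * X 1 := by
  conv_lhs => rw [rep hl]
  rw [smul_add, smul_eq_C_mul, smul_eq_C_mul, map_mul, map_mul]
  ring

lemma cX_smul (c : K) (p : P2) : cX (c • p) = c * cX p := by
  simp [cX, MvPolynomial.coeff_smul, smul_eq_mul]

lemma cY_smul (c : K) (p : P2) : cY (c • p) = c * cY p := by
  simp [cY, MvPolynomial.coeff_smul, smul_eq_mul]

lemma lin_ext {p q : P2} (hp : p.IsHomogeneous 1) (hq : q.IsHomogeneous 1)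
    (h1 : cX p = cX q) (h2 : cY p = cY q) : p = q := by
  rw [rep hp, rep hq, h1, h2]

lemma smul_homog1 (c : K) {l : P2} (hl : l.IsHomogeneous 1) : (c • l).IsHomogeneous 1 := by
  rw [smul_eq_C_mul]
  simpa using (isHomogeneous_C (Fin 2) c).mul hl

lemma pr_perp_ne_zero {l l' : P2} (hl : IsLinForm l) (hl' : IsLinForm l')
    (hnp : ∀ c : K, l' ≠ c • l) : pr l' (perp l) ≠ 0 := by
  intro h
  rw [pr, cX_perp, cY_perp] at h
  have hdet : cX l' * cY l = cY l' * cX l := by linear_combination h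
  by_cases ha : cX l = 0
  · have hb : cY l ≠ 0 := by
      intro hb
      exact hl.1 (by rw [rep hl.2, ha, hb]; simp)
    have hx' : cX l' = 0 := by
      have := hdet; rw [ha, mul_zero] at this
      exact (mul_eq_zero.mp this).resolve_right hb
    exact hnp (cY l' / cY l) (lin_ext hl'.2 (smul_homog1 _ hl.2)
      (by rw [cX_smul, ha, hx', mul_zero]) (by rw [cY_smul]; field_simp))
  · exact hnp (cX l' / cX l) (lin_ext hl'.2 (smul_homog1 _ hl.2)
      (by rw [cX_smul]; field_simp)
      (by rw [cY_smul, div_mul_eq_mul_div, eq_comm, div_eq_iff ha]; linear_combination hdet))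


lemma comb (a b p q r s : K) :
    C a * (C p * X 0 + C q * X 1) + C b * (C r * X 0 + C s * X 1) =
    C (a * p + b * r) * X 0 + C (a * q + b * s) * (X 1 : P2) := by
  simp only [map_add, map_mul]
  ring

lemma cX_CC (a b : K) : cX (C a * X 0 + C b * X 1 : P2) = a := by
  simp [cX, coeff_add, coeff_C_mul, coeff_X', single_ne.symm]

lemma cY_CC (a b : K) : cY (C a * X 0 + C b * X 1 : P2) = b := by
  simp [cY, coeff_add, coeff_C_mul, coeff_X', single_ne]

lemma CC_homog (a b : K) : (C a * X 0 + C b * X 1 : P2).IsHomogeneous 1 := by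
  apply MvPolynomial.IsHomogeneous.add <;>
    simpa using (isHomogeneous_C (Fin 2) _).mul (isHomogeneous_X K _)

/-- determinant of two linear forms -/
def dt (u v : P2) : K := cX u * cY v - cY u * cX v

/-- first row of the inverse substitution -/
def du (u v : P2) : P2 := C (cY v / dt u v) * X 0 + C (-(cY u) / dt u v) * X 1
/-- second row of the inverse substitution -/
def dv (u v : P2) : P2 := C (-(cX v) / dt u v) * X 0 + C (cX u / dt u v) * X 1

lemma aeval_linear (u v : P2) {w : P2} (hw : w.IsHomogeneous 1) :
    aeval ![u, v] w = C (cX w) * u + C (cY w) * v := by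
  conv_lhs => rw [rep hw]
  simp [algebraMap_eq]

lemma tau_sigma (u v : P2) (hu : u.IsHomogeneous 1) (hv : v.IsHomogeneous 1)
    (hdet : dt u v ≠ 0) (p : P2) :
    aeval ![du u v, dv u v] (aeval ![u, v] p) = p := by
  have : (aeval ![du u v, dv u v]).comp (aeval ![u, v]) =
      AlgHom.id K (MvPolynomial (Fin 2) K) := by
    apply MvPolynomial.algHom_ext
    intro i
    fin_cases i
    · show aeval ![du u v, dv u v] (aeval ![u, v] (X 0)) = X 0
      rw [aeval_X]
      show aeval ![du u v, dv u v] (![u, v] 0) = X 0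
      simp only [Matrix.cons_val_zero]
      rw [aeval_linear _ _ hu, du, dv, comb]
      have h' : cX u * cY v - cY u * cX v ≠ 0 := hdet
      have e1 : cX u * (cY v / dt u v) + cY u * (-(cX v) / dt u v) = 1 := by
        field_simp [dt]; unfold dt; ring
      have e2 : cX u * (-(cY u) / dt u v) + cY u * (cX u / dt u v) = 0 := by
        field_simp [dt]; ring
      rw [e1, e2]
      simp
    · show aeval ![du u v, dv u v] (aeval ![u, v] (X 1)) = X 1
      rw [aeval_X]
      show aeval ![du u v, dv u v] (![u, v] 1) = X 1
      simp only [Matrix.cons_val_one, Matrix.head_cons, Matrix.cons_val_zero]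
      rw [aeval_linear _ _ hv, du, dv, comb]
      have h' : cX u * cY v - cY u * cX v ≠ 0 := hdet
      have e1 : cX v * (cY v / dt u v) + cY v * (-(cX v) / dt u v) = 0 := by
        field_simp [dt]; ring
      have e2 : cX v * (-(cY u) / dt u v) + cY v * (cX u / dt u v) = 1 := by
        field_simp [dt]; unfold dt; ring
      rw [e1, e2]
      simp
  calc aeval ![du u v, dv u v] (aeval ![u, v] p)
      = ((aeval ![du u v, dv u v]).comp (aeval ![u, v])) p := rfl
    _ = p := by rw [this]; rfl

lemma sigma_tau (u v : P2) (hu : u.IsHomogeneous 1) (hv : v.IsHomogeneous 1)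
    (hdet : dt u v ≠ 0) (p : P2) :
    aeval ![u, v] (aeval ![du u v, dv u v] p) = p := by
  have h' : cX u * cY v - cY u * cX v ≠ 0 := hdet
  have key : ∀ a b : K, aeval ![u, v] (C a * X 0 + C b * X 1) =
      C (a * cX u + b * cX v) * X 0 + C (a * cY u + b * cY v) * X 1 := by
    intro a b
    have : aeval ![u, v] (C a * X 0 + C b * X 1) = C a * u + C b * v := by
      simp [algebraMap_eq]
    rw [this]
    conv_lhs => rw [rep hu, rep hv]
    rw [comb]
  have : (aeval ![u, v]).comp (aeval ![du u v, dv u v]) =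
      AlgHom.id K (MvPolynomial (Fin 2) K) := by
    apply MvPolynomial.algHom_ext
    intro i
    fin_cases i
    · show aeval ![u, v] (aeval ![du u v, dv u v] (X 0)) = X 0
      rw [aeval_X]
      show aeval ![u, v] (![du u v, dv u v] 0) = X 0
      simp only [Matrix.cons_val_zero]
      rw [du, key]
      have e1 : cY v / dt u v * cX u + -(cY u) / dt u v * cX v = 1 := by
        field_simp [dt]; unfold dt; ring
      have e2 : cY v / dt u v * cY u + -(cY u) / dt u v * cY v = 0 := by
        field_simp [dt]; ring
      rw [e1, e2]
      simp
    · show aeval ![u, v] (aeval ![du u v, dv u v] (X 1)) = X 1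
      rw [aeval_X]
      show aeval ![u, v] (![du u v, dv u v] 1) = X 1
      simp only [Matrix.cons_val_one, Matrix.head_cons, Matrix.cons_val_zero]
      rw [dv, key]
      have e1 : -(cX v) / dt u v * cX u + cX u / dt u v * cX v = 0 := by
        field_simp [dt]; ring
      have e2 : -(cX v) / dt u v * cY u + cX u / dt u v * cY v = 1 := by
        field_simp [dt]; unfold dt; ring
      rw [e1, e2]
      simp
  calc aeval ![u, v] (aeval ![du u v, dv u v] p)
      = ((aeval ![u, v]).comp (aeval ![du u v, dv u v])) p := rfl
    _ = p := by rw [this]; rfl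


lemma aeval_monomial_two (u v : P2) (m : Fin 2 →₀ ℕ) (c : K) :
    aeval ![u, v] (monomial m c) = C c * (u ^ m 0 * v ^ m 1) := by
  rw [aeval_monomial, algebraMap_eq]
  congr 1
  rw [Finsupp.prod_fintype _ _ (fun i => pow_zero _), Fin.prod_univ_two]
  simp

lemma homog_term {u v : P2} (hu : u.IsHomogeneous 1) (hv : v.IsHomogeneous 1)
    (a b : ℕ) : (u ^ a * v ^ b).IsHomogeneous (a + b) := by
  have := (hu.pow a).mul (hv.pow b)
  simpa using this

lemma aeval_homog {u v : P2} (hu : u.IsHomogeneous 1) (hv : v.IsHomogeneous 1)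
    {p : P2} {n : ℕ} (hp : p.IsHomogeneous n) :
    (aeval ![u, v] p).IsHomogeneous n := by
  conv_lhs => rw [as_sum p]
  rw [map_sum]
  apply MvPolynomial.IsHomogeneous.sum
  intro m hm
  rw [aeval_monomial_two]
  have hdeg : m 0 + m 1 = n := by
    have := hp (mem_support_iff.mp hm)
    rwa [Pi.one_def, ← Finsupp.degree_eq_weight_one, fin2_degree] at this
  have h1 := homog_term hu hv (m 0) (m 1)
  rw [hdeg] at h1
  exact h1.C_mul _


lemma span_binom {u v : P2} (hu : u.IsHomogeneous 1) (hv : v.IsHomogeneous 1)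
    (hdet : dt u v ≠ 0) (k : ℕ) {p : P2} (hp : p.IsHomogeneous k) :
    p ∈ span K (Set.range fun j : Fin (k + 1) => u ^ (j : ℕ) * v ^ (k - (j : ℕ))) := by
  have hqh : (aeval ![du u v, dv u v] p).IsHomogeneous k :=
    aeval_homog (CC_homog _ _) (CC_homog _ _) hp
  set q := aeval ![du u v, dv u v] p with hq
  have hpq : p = aeval ![u, v] q := (sigma_tau u v hu hv hdet p).symm
  rw [hpq, as_sum q, map_sum]
  apply Submodule.sum_mem
  intro m hm
  rw [aeval_monomial_two, ← smul_eq_C_mul]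
  apply Submodule.smul_mem
  apply subset_span
  have hdeg : m 0 + m 1 = k := by
    have := hqh (mem_support_iff.mp hm)
    rwa [Pi.one_def, ← Finsupp.degree_eq_weight_one, fin2_degree] at this
  have hm1 : m 1 = k - m 0 := by omega
  refine ⟨⟨m 0, by omega⟩, ?_⟩
  simp only [Fin.val_mk]
  rw [hm1]

lemma tau_u {u v : P2} (hu : u.IsHomogeneous 1) (hv : v.IsHomogeneous 1)
    (hdet : dt u v ≠ 0) : aeval ![du u v, dv u v] u = X 0 := by
  have := tau_sigma u v hu hv hdet (X 0)
  rw [aeval_X] at this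
  simpa using this

lemma tau_v {u v : P2} (hu : u.IsHomogeneous 1) (hv : v.IsHomogeneous 1)
    (hdet : dt u v ≠ 0) : aeval ![du u v, dv u v] v = X 1 := by
  have := tau_sigma u v hu hv hdet (X 1)
  rw [aeval_X] at this
  simpa using this

lemma indep_binom {u v : P2} (hu : u.IsHomogeneous 1) (hv : v.IsHomogeneous 1)
    (hdet : dt u v ≠ 0) (k : ℕ) (c : Fin (k + 1) → K)
    (h : ∑ j, c j • (u ^ (j : ℕ) * v ^ (k - (j : ℕ))) = 0) : ∀ j, c j = 0 := by
  intro j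
  have h2 : ∑ i : Fin (k + 1), c i •
      (X 0 ^ (i : ℕ) * X 1 ^ (k - (i : ℕ)) : P2) = 0 := by
    have := congrArg (aeval ![du u v, dv u v]) h
    rw [map_zero, map_sum] at this
    simpa only [map_smul, map_mul, map_pow, tau_u hu hv hdet, tau_v hu hv hdet] using this
  have h3 : ∑ i : Fin (k + 1), c i •
      (monomial (Finsupp.single (0 : Fin 2) (i : ℕ) + Finsupp.single (1 : Fin 2) (k - (i : ℕ))) (1 : K)) = 0 := by
    simpa only [X_pow_eq_monomial, monomial_mul, one_mul] using h2
  have h4 := congrArg (coeff (Finsupp.single (0 : Fin 2) (j : ℕ) + Finsupp.single (1 : Fin 2) (k - (j : ℕ)))) h3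
  rw [coeff_zero, coeff_sum] at h4
  rw [Finset.sum_eq_single j] at h4
  · rw [MvPolynomial.coeff_smul, coeff_monomial, if_pos rfl] at h4
    simpa using h4
  · intro i _ hij
    rw [MvPolynomial.coeff_smul, coeff_monomial, if_neg, smul_zero]
    intro hc
    apply hij
    have := DFunLike.congr_fun hc 0
    simp only [Finsupp.add_apply, Finsupp.single_apply] at this
    norm_num at this
    exact Fin.ext this
  · intro hj
    simp at hj


lemma homog0 {p : P2} (hp : p.IsHomogeneous 0) : p = C (coeff 0 p) := by
  ext m
  by_cases hm : m = 0
  · subst hm; simp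
  · rw [hp.coeff_eq_zero (by rwa [Ne, Finsupp.degree_eq_zero_iff]), coeff_C,
      if_neg (fun hc => hm hc.symm)]

lemma smul_homog (c : K) {p : P2} {n : ℕ} (hp : p.IsHomogeneous n) :
    (c • p).IsHomogeneous n := by
  rw [smul_eq_C_mul]
  simpa using hp.C_mul c

lemma pderiv_homog (i : Fin 2) {G : P2} {n : ℕ} (hG : G.IsHomogeneous n) :
    (pderiv i G).IsHomogeneous (n - 1) := by
  conv_lhs => rw [as_sum G]
  rw [map_sum]
  apply MvPolynomial.IsHomogeneous.sum
  intro m hm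
  rw [pderiv_monomial]
  by_cases hmi : m i = 0
  · rw [hmi]
    norm_num
    exact isHomogeneous_zero _ _ _
  · apply isHomogeneous_monomial
    have hdeg : m 0 + m 1 = n := by
      have := hG (mem_support_iff.mp hm)
      rwa [Pi.one_def, ← Finsupp.degree_eq_weight_one, fin2_degree] at this
    rw [fin2_degree, Finsupp.tsub_apply, Finsupp.tsub_apply]
    have hi : i = 0 ∨ i = 1 := by omega
    rcases hi with rfl | rfl
    · rw [Finsupp.single_apply, Finsupp.single_apply]
      norm_num
      omega
    · rw [Finsupp.single_apply, Finsupp.single_apply]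
      have h01 : ¬ ((1 : Fin 2) = 0) := by norm_num
      rw [if_neg h01, if_pos rfl]
      omega

lemma diffOp_lin_homog {l G : P2} {n : ℕ} (hl : l.IsHomogeneous 1)
    (hG : G.IsHomogeneous n) : (diffOp l G).IsHomogeneous (n - 1) := by
  rw [diffOp_eq_lDeriv hl]
  show (cX l • pderiv 0 G + cY l • pderiv 1 G : P2).IsHomogeneous (n - 1)
  exact (smul_homog _ (pderiv_homog 0 hG)).add (smul_homog _ (pderiv_homog 1 hG))


lemma cX_X0 : cX (X 0 : P2) = 1 := by simp [cX]
lemma cY_X0 : cY (X 0 : P2) = 0 := by simp [cY, coeff_X', single_ne]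
lemma cX_X1 : cX (X 1 : P2) = 0 := by simp [cX, coeff_X', single_ne.symm]
lemma cY_X1 : cY (X 1 : P2) = 1 := by simp [cY]

lemma ker_single [CharZero K] {l : P2} (hl : IsLinForm l) (n : ℕ) {G : P2} (hG : G.IsHomogeneous n)
    (h0 : diffOp l G = 0) : G ∈ span K ({perp l ^ n} : Set P2) := by
  cases n with
  | zero =>
    rw [pow_zero]
    exact mem_span_singleton.mpr ⟨coeff 0 G, by rw [smul_eq_C_mul, mul_one, ← homog0 hG]⟩
  | succ n' =>
    have hab : cX l ≠ 0 ∨ cY l ≠ 0 := by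
      by_contra hc
      push_neg at hc
      exact hl.1 (by rw [rep hl.2, hc.1, hc.2]; simp)
    obtain ⟨u, hu, hdet, he⟩ : ∃ u : P2, u.IsHomogeneous 1 ∧ dt u (perp l) ≠ 0 ∧
        pr l u ≠ 0 := by
      rcases hab with ha | hb
      · refine ⟨X 0, isHomogeneous_X K 0, ?_, ?_⟩
        · rw [dt, cX_X0, cY_X0, cX_perp, cY_perp]
          simpa using ha
        · rw [pr, cX_X0, cY_X0]
          simpa using ha
      · refine ⟨X 1, isHomogeneous_X K 1, ?_, ?_⟩
        · rw [dt, cX_X1, cY_X1, cX_perp, cY_perp]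
          simpa using hb
        · rw [pr, cX_X1, cY_X1]
          simpa using hb
    have hGspan := span_binom hu (perp_homog (l := l)) hdet (n' + 1) hG
    rw [mem_span_range_iff_exists_fun] at hGspan
    obtain ⟨g, hg⟩ := hGspan
    have hm0 : ∀ t : ℕ, diffOp l (perp l ^ t) = 0 := by
      intro t
      rw [diffOp_lin_pow hl.2 perp_homog, pr_perp_self, mul_zero, zero_smul]
    have hD : ∀ j : Fin (n' + 2), diffOp l (u ^ (j : ℕ) * perp l ^ (n' + 1 - (j : ℕ))) =
        (((j : ℕ) : K) * pr l u) • (u ^ ((j : ℕ) - 1) * perp l ^ (n' + 1 - (j : ℕ))) := by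
      intro j
      have hlz : diffOp l (u ^ (j : ℕ) * perp l ^ (n' + 1 - (j : ℕ))) =
          u ^ (j : ℕ) * diffOp l (perp l ^ (n' + 1 - (j : ℕ))) +
          perp l ^ (n' + 1 - (j : ℕ)) * diffOp l (u ^ (j : ℕ)) := by
        rw [diffOp_eq_lDeriv hl.2, Derivation.leibniz, diffOp_eq_lDeriv hl.2,
          diffOp_eq_lDeriv hl.2, smul_eq_mul, smul_eq_mul]
      rw [hlz, hm0, mul_zero, zero_add, diffOp_lin_pow hl.2 hu, mul_smul_comm,
        mul_comm (perp l ^ (n' + 1 - (j : ℕ))) (u ^ ((j : ℕ) - 1))]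
    have hsum : ∑ j : Fin (n' + 2), (g j * (((j : ℕ) : K) * pr l u)) •
        (u ^ ((j : ℕ) - 1) * perp l ^ (n' + 1 - (j : ℕ))) = 0 := by
      have : diffOp l G = ∑ j : Fin (n' + 2), (g j * (((j : ℕ) : K) * pr l u)) •
          (u ^ ((j : ℕ) - 1) * perp l ^ (n' + 1 - (j : ℕ))) := by
        rw [← hg, map_sum]
        apply Finset.sum_congr rfl
        intro j _
        rw [map_smul, hD j, smul_smul]
      rw [← this, h0]
    rw [Fin.sum_univ_succ] at hsum
    simp only [Fin.val_zero, Nat.cast_zero, zero_mul, mul_zero, zero_smul, zero_add,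
      Fin.val_succ, Nat.cast_add, Nat.cast_one, Nat.add_sub_cancel, Nat.succ_sub_succ] at hsum
    have hgz : ∀ i : Fin (n' + 1), g i.succ = 0 := by
      intro i
      have hcoef := indep_binom hu (perp_homog (l := l)) hdet n' _ hsum i
      have hne : ((((i : ℕ) : K) + 1) * pr l u) ≠ 0 :=
        mul_ne_zero (Nat.cast_add_one_ne_zero _) he
      exact (mul_eq_zero.mp hcoef).resolve_right hne
    rw [← hg, Fin.sum_univ_succ]
    apply Submodule.add_mem
    · apply Submodule.smul_mem
      apply subset_span
      simp
    · apply Submodule.sum_mem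
      intro i _
      rw [hgz i, zero_smul]
      exact Submodule.zero_mem _


lemma key [CharZero K] (z : ℕ) : ∀ (d : ℕ) (G : P2), G.IsHomogeneous d →
    ∀ l : Fin z → P2, (∀ i, IsLinForm (l i)) →
    (∀ i j, i ≠ j → ∀ c : K, l i ≠ c • l j) →
    diffOp (∏ i, l i) G = 0 →
    G ∈ span K (Set.range fun i : Fin z => perp (l i) ^ d) := by
  induction z with
  | zero =>
    intro d G hG l _ _ h0
    rw [Fin.prod_univ_zero, diffOp_one] at h0
    rw [show G = 0 from h0]
    exact Submodule.zero_mem _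
  | succ z ih =>
    intro d G hG l hlin hnp h0
    cases d with
    | zero =>
      rw [homog0 hG]
      have : (C (coeff 0 G) : P2) = (coeff 0 G) • ((fun i : Fin (z+1) => perp (l i) ^ 0) 0) := by
        simp [smul_eq_C_mul]
      rw [this]
      exact Submodule.smul_mem _ _ (subset_span ⟨0, rfl⟩)
    | succ d' =>
      rw [Fin.prod_univ_castSucc, diffOp_mul] at h0
      rw [Module.End.mul_apply] at h0
      set G' := diffOp (l (Fin.last z)) G with hG'def
      have hG' : G'.IsHomogeneous d' := by
        simpa using diffOp_lin_homog (hlin (Fin.last z)).2 hG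
      have hmem := ih d' G' hG' (fun i => l i.castSucc) (fun i => hlin _)
        (fun i j hij c => hnp _ _ (fun hc => hij (Fin.castSucc_injective _ hc)) c) h0
      rw [mem_span_range_iff_exists_fun] at hmem
      obtain ⟨b, hb⟩ := hmem
      have he : ∀ i : Fin z, pr (l (Fin.last z)) (perp (l i.castSucc)) ≠ 0 := by
        intro i
        apply pr_perp_ne_zero (hlin _) (hlin _)
        intro c
        exact hnp _ _ (Fin.ne_last_of_lt (Fin.castSucc_lt_last i)).symm c
      set e : Fin z → K := fun i => pr (l (Fin.last z)) (perp (l i.castSucc)) with he_def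
      set H : P2 := ∑ i : Fin z,
        (b i / ((((d' + 1 : ℕ)) : K) * e i)) • (perp (l i.castSucc) ^ (d' + 1)) with hH
      have hDH : diffOp (l (Fin.last z)) H = G' := by
        rw [hH, map_sum, ← hb]
        apply Finset.sum_congr rfl
        intro i _
        rw [map_smul, diffOp_lin_pow (hlin (Fin.last z)).2 perp_homog, smul_smul,
          Nat.add_sub_cancel]
        congr 1
        rw [div_mul_cancel₀]
        exact mul_ne_zero (Nat.cast_ne_zero.mpr (Nat.succ_ne_zero d')) (he i)
      have hGH : (G - H).IsHomogeneous (d' + 1) := by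
        apply hG.sub
        rw [hH]
        apply MvPolynomial.IsHomogeneous.sum
        intro i _
        apply smul_homog
        simpa using (perp_homog (l := l i.castSucc)).pow (d' + 1)
      have hdiff : diffOp (l (Fin.last z)) (G - H) = 0 := by
        rw [map_sub, hDH, hG'def, sub_self]
      have hker := ker_single (hlin (Fin.last z)) (d' + 1) hGH hdiff
      have hGeq : G = (G - H) + H := by ring
      rw [hGeq]
      apply Submodule.add_mem
      · refine Submodule.span_mono ?_ hker
        rw [Set.singleton_subset_iff]
        exact ⟨Fin.last z, rfl⟩
      · rw [hH]
        apply Submodule.sum_mem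
        intro i _
        exact Submodule.smul_mem _ _ (subset_span ⟨i.castSucc, rfl⟩)


end Aux

/-- reduced case of Proposition 2.10 of the paper: if `z` is the least degree
of a nonzero form annihilating some lift `F + cO`, and some *squarefree* form `h` of degree `z`
annihilates a lift `F + cO`, then `R_X(F) = z`. -/
theorem rankX_eq_of_squarefree_apolar
    {K : Type*} [Field K] [IsAlgClosed K] [CharZero K] (d : ℕ) (hd : 2 ≤ d)
    (O : MvPolynomial (Fin 2) K) (hOd : O.IsHomogeneous d) (hO0 : O ≠ 0)
    (hOC : ∀ (c : K) (l : MvPolynomial (Fin 2) K), IsLinForm l → O ≠ c • l ^ d)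
    (F : MvPolynomial (Fin 2) K) (hFd : F.IsHomogeneous d)
    (hFO : F ∉ span K ({O} : Set (MvPolynomial (Fin 2) K)))
    (z : ℕ)
    (hz : IsLeast {n : ℕ | ∃ (h : MvPolynomial (Fin 2) K) (c : K),
      h ≠ 0 ∧ h.IsHomogeneous n ∧ diffOp h (F + c • O) = 0} z)
    (hsq : ∃ (h : MvPolynomial (Fin 2) K) (c : K),
      h.IsHomogeneous z ∧ IsSqfreeForm z h ∧ diffOp h (F + c • O) = 0) :
    RX d O F = z := by
  -- membership of `z` in the rank set
  have hzmem : z ∈ {r : ℕ | ∃ l : Fin r → MvPolynomial (Fin 2) K, (∀ i, IsLinForm (l i)) ∧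
      F ∈ span K (insert O (Set.range fun i => l i ^ d))} := by
    obtain ⟨h, c, hhom, ⟨l, hlin, hnp, rfl⟩, hann⟩ := hsq
    have hGd : (F + c • O).IsHomogeneous d := hFd.add (Aux.smul_homog c hOd)
    have hGs := Aux.key z d (F + c • O) hGd l hlin hnp hann
    refine ⟨fun i => Aux.perp (l i), fun i => Aux.perp_linForm (hlin i), ?_⟩
    have hFeq : F = (F + c • O) + (-c) • O := by
      rw [neg_smul]
      exact (add_neg_cancel_right F (c • O)).symm
    rw [hFeq]
    apply Submodule.add_mem
    · exact Submodule.span_mono (Set.subset_insert _ _) hGs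
    · exact Submodule.smul_mem _ _ (subset_span (Set.mem_insert _ _))
  -- every element of the rank set is at least `z`
  have hlow : ∀ r ∈ {r : ℕ | ∃ l : Fin r → MvPolynomial (Fin 2) K, (∀ i, IsLinForm (l i)) ∧
      F ∈ span K (insert O (Set.range fun i => l i ^ d))}, z ≤ r := by
    rintro r ⟨l, hlin, hF⟩
    rw [Submodule.mem_span_insert] at hF
    obtain ⟨a, w, hw, hFeq⟩ := hF
    rw [mem_span_range_iff_exists_fun] at hw
    obtain ⟨t, ht⟩ := hw
    apply hz.2
    refine ⟨∏ i : Fin r, Aux.perp (l i), -a, ?_, ?_, ?_⟩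
    · rw [Finset.prod_ne_zero_iff]
      exact fun i _ => (Aux.perp_linForm (hlin i)).1
    · have := MvPolynomial.IsHomogeneous.prod Finset.univ
        (fun i : Fin r => Aux.perp (l i)) (fun _ => 1)
        (fun i _ => Aux.perp_homog)
      simpa using this
    · have hwF : F + (-a) • O = w := by
        rw [hFeq, neg_smul]
        abel
      rw [hwF, ← ht, map_sum]
      apply Finset.sum_eq_zero
      intro i _
      rw [map_smul]
      have hsplit : (∏ j : Fin r, Aux.perp (l j)) =
          (∏ j ∈ Finset.univ.erase i, Aux.perp (l j)) * Aux.perp (l i) :=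
        (Finset.prod_erase_mul _ _ (Finset.mem_univ i)).symm
      rw [hsplit, Aux.diffOp_mul, Module.End.mul_apply,
        Aux.diffOp_lin_pow Aux.perp_homog (hlin i).2, Aux.pr_perp_self', mul_zero,
        zero_smul, map_zero, smul_zero]
  rw [RX]
  exact le_antisymm (Nat.sInf_le hzmem) (le_csInf ⟨z, hzmem⟩ hlow)
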